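/- Let n ≥ 1 and 0 < p ≤ 2. There is a constant C > 0 depending only on n and p such that for every locally square integrable function g on (0,∞)×ℝⁿ, ‖Vg‖_{L^p(ℝⁿ)} ≤ C ‖g‖_{T^{p,2}_1}. -/

import Mathlib

open MeasureTheory Metric Set Filter ENNReal Topology

set_option maxHeartbeats 1000000
noncomputable section

/-- `ℝⁿ` as a Euclidean space. -/
abbrev En (n : ℕ) : Type := EuclideanSpace ℝ (Fin n)

/-- `g` is (measurable and) locally square integrable on `(0,∞) × ℝⁿ`. -/
def LocSqInt (n : ℕ) (g : ℝ → En n → ℝ) : Prop :=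
  Measurable (Function.uncurry g) ∧
  LocallyIntegrableOn (fun q : ℝ × En n => (g q.1 q.2) ^ 2)
    (Set.Ioi (0 : ℝ) ×ˢ (Set.univ : Set (En n)))

/-- The conical square function `A^{(α)} g (x)` of aperture `α`, with values in `[0,∞]`. -/
def conicalSq (n : ℕ) (α : ℝ) (g : ℝ → En n → ℝ) (x : En n) : ℝ≥0∞ :=
  (∫⁻ t in Set.Ioi (0 : ℝ), ∫⁻ y,
      (ball x (α * t)).indicator (fun y => ENNReal.ofReal (|g t y| ^ 2 / t ^ (n + 1))) y) ^
    (1 / 2 : ℝ)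

/-- The tent space quasi-norm `‖g‖_{T^{p,2}_α} = ‖A^{(α)} g‖_{L^p(ℝⁿ)}`, with values in `[0,∞]`. -/
def tentNorm (n : ℕ) (p α : ℝ) (g : ℝ → En n → ℝ) : ℝ≥0∞ :=
  (∫⁻ x, conicalSq n α g x ^ p) ^ (1 / p)

/-- The vertical square function `V g (x)`. -/
def vertSq (n : ℕ) (g : ℝ → En n → ℝ) (x : En n) : ℝ≥0∞ :=
  (∫⁻ t in Set.Ioi (0 : ℝ), ENNReal.ofReal (|g t x| ^ 2 / t)) ^ (1 / 2 : ℝ)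

/-- `‖V g‖_{L^p(ℝⁿ)}`, with values in `[0,∞]`. -/
def vertNorm (n : ℕ) (p : ℝ) (g : ℝ → En n → ℝ) : ℝ≥0∞ :=
  (∫⁻ x, vertSq n g x ^ p) ^ (1 / p)

/-- The tent `T_α B` of aperture `α` above the ball `B = B(x,r)`. -/
def tent (n : ℕ) (α : ℝ) (x : En n) (r : ℝ) : Set (ℝ × En n) :=
  {q | 0 < q.1 ∧ q.1 < r / α ∧ q.2 ∈ ball x (r - α * q.1)}

/-- `∫_{T_α B} |g(t,y)|² dy dt / t`. -/
def tentIntegral (n : ℕ) (α : ℝ) (g : ℝ → En n → ℝ) (x : En n) (r : ℝ) : ℝ≥0∞ :=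
  ∫⁻ q in tent n α x r, ENNReal.ofReal (|g q.1 q.2| ^ 2 / q.1)

/-- A `T^{p,2}_α`-atom associated with the ball `B(x,r)`: it is supported in the tent
`T_α B(x,r)` and satisfies `∫_{T_α B} |a|² dy dt/t ≤ α^{-n} |B|^{-(2/p - 1)}`. -/
def IsTentAtom (n : ℕ) (p α : ℝ) (a : ℝ → En n → ℝ) (x : En n) (r : ℝ) : Prop :=
  (∀ t y, (t, y) ∉ tent n α x r → a t y = 0) ∧
  tentIntegral n α a x r ≤
    ENNReal.ofReal (α ^ (-(n : ℝ))) * volume (ball x r) ^ (-(2 / p - 1))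

/-- The grand square function `G_λ g (x)` with exponent `nλ`. -/
def grandSq (n : ℕ) (l : ℝ) (g : ℝ → En n → ℝ) (x : En n) : ℝ≥0∞ :=
  (∫⁻ t in Set.Ioi (0 : ℝ), ∫⁻ y,
      ENNReal.ofReal ((t / (dist x y + t)) ^ ((n : ℝ) * l) * |g t y| ^ 2 / t ^ (n + 1))) ^
    (1 / 2 : ℝ)



section Aux
variable {n : ℕ} {g : ℝ → En n → ℝ}



lemma En.nontrivial (hn : 1 ≤ n) : Nontrivial (En n) := by
  haveI : Nonempty (Fin n) := ⟨⟨0, hn⟩⟩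
  infer_instance

lemma vol_cball (hn : 1 ≤ n) (x : En n) {t : ℝ} (ht : 0 ≤ t) :
    volume (closedBall x t) = ENNReal.ofReal (t ^ n) * volume (ball (0 : En n) 1) := by
  have := MeasureTheory.Measure.addHaar_closedBall (volume : Measure (En n)) x ht
  rwa [finrank_euclideanSpace_fin] at this

lemma vol_ball_eq (hn : 1 ≤ n) (x : En n) {t : ℝ} (ht : 0 ≤ t) :
    volume (ball x t) = ENNReal.ofReal (t ^ n) * volume (ball (0 : En n) 1) := by
  haveI := En.nontrivial hn
  have := MeasureTheory.Measure.addHaar_ball (volume : Measure (En n)) x ht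
  rwa [finrank_euclideanSpace_fin] at this

lemma vol_cball_eq_ball (hn : 1 ≤ n) (x : En n) (t : ℝ) :
    volume (closedBall x t) = volume (ball x t) := by
  haveI := En.nontrivial hn
  exact MeasureTheory.Measure.addHaar_closedBall_eq_addHaar_ball (volume : Measure (En n)) x t

/-- The set of points where `O` has density `> 1/2` on some closed ball. -/
def Ostar (n : ℕ) (O : Set (En n)) : Set (En n) :=
  {y | ∃ t > 0, volume (closedBall y t) < 2 * volume (O ∩ closedBall y t)}

lemma isOpen_Ostar (hn : 1 ≤ n) (O : Set (En n)) : IsOpen (Ostar n O) := by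
  rw [Metric.isOpen_iff]
  rintro y ⟨t, ht, hlt⟩
  have cont : Tendsto (fun d : ℝ => volume (closedBall y (t + d))) (𝓝[>] (0:ℝ))
      (𝓝 (volume (closedBall y t))) := by
    have h1 : Tendsto (fun d : ℝ => ENNReal.ofReal ((t + d) ^ n)) (𝓝[>] (0:ℝ))
        (𝓝 (ENNReal.ofReal (t ^ n))) := by
      apply ENNReal.tendsto_ofReal
      have : Tendsto (fun d : ℝ => (t + d) ^ n) (𝓝 0) (𝓝 ((t + 0) ^ n)) :=
        ((continuous_const.add continuous_id).pow n).tendsto 0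
      simpa using this.mono_left nhdsWithin_le_nhds
    have hfin : volume (ball (0 : En n) 1) ≠ ⊤ := measure_ball_lt_top.ne
    have h2 := ENNReal.Tendsto.mul_const h1 (Or.inr hfin)
    rw [vol_cball hn y ht.le]
    refine Tendsto.congr' ?_ h2
    filter_upwards [self_mem_nhdsWithin] with d (hd : 0 < d)
    rw [vol_cball hn y (by positivity)]
  have hev := cont.eventually_lt_const hlt
  rcases Metric.mem_nhdsWithin_iff.1 (inter_mem hev self_mem_nhdsWithin) with ⟨ε, hε, hsub⟩
  -- pick d := ε/2
  have hd2 : (ε/2 : ℝ) ∈ ball (0:ℝ) ε ∩ Ioi 0 := by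
    constructor
    · rw [mem_ball, Real.dist_eq, sub_zero, abs_of_pos (half_pos hε)]
      linarith
    · exact half_pos hε
  obtain ⟨hvd, hdpos⟩ := hsub hd2
  refine ⟨ε/2, half_pos hε, fun y' hy' => ?_⟩
  refine ⟨t + ε/2, by positivity, ?_⟩
  have hsubball : closedBall y t ⊆ closedBall y' (t + ε/2) := by
    apply closedBall_subset_closedBall'
    rw [dist_comm]
    have := mem_ball.1 hy'
    linarith [le_of_lt this]
  calc volume (closedBall y' (t + ε/2)) = volume (closedBall y (t + ε/2)) := by
        rw [vol_cball hn _ (by positivity), vol_cball hn _ (by positivity)]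
    _ < 2 * volume (O ∩ closedBall y t) := hvd
    _ ≤ 2 * volume (O ∩ closedBall y' (t + ε/2)) := by
        gcongr

lemma weakMax (hn : 1 ≤ n) (O : Set (En n)) (hO : MeasurableSet O) :
    volume (Ostar n O) ≤ 2 * 4 ^ n * volume O := by
  by_cases hV : volume O = ⊤
  · rw [hV]
    rw [ENNReal.mul_top (mul_ne_zero (by norm_num) (pow_ne_zero _ (by norm_num)))]
    exact le_top
  set c := volume (ball (0 : En n) 1) with hc
  have hcpos : 0 < c := measure_ball_pos _ _ one_pos
  have hcfin : c ≠ ⊤ := measure_ball_lt_top.ne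
  -- choice of radii
  have hch : ∀ y ∈ Ostar n O, ∃ t > 0,
      volume (closedBall y t) < 2 * volume (O ∩ closedBall y t) := fun y hy => hy
  classical
  set r : En n → ℝ := fun y => if h : y ∈ Ostar n O then (hch y h).choose else 0 with hr
  have hrpos : ∀ y ∈ Ostar n O, 0 < r y := by
    intro y hy; rw [hr]; simp only [dif_pos hy]; exact (hch y hy).choose_spec.1
  have hrlt : ∀ y ∈ Ostar n O,
      volume (closedBall y (r y)) < 2 * volume (O ∩ closedBall y (r y)) := by
    intro y hy; rw [hr]; simp only [dif_pos hy]; exact (hch y hy).choose_spec.2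
  -- uniform bound on radii
  set M : ℝ := (2 * volume O / c).toReal with hM
  have hrle : ∀ y ∈ Ostar n O, r y ≤ max M 1 := by
    intro y hy
    by_contra hcon
    push_neg at hcon
    have h1 : (1:ℝ) < r y := lt_of_le_of_lt (le_max_right _ _) hcon
    have hMlt : M < r y := lt_of_le_of_lt (le_max_left _ _) hcon
    have hpow : r y ≤ r y ^ n := le_self_pow₀ h1.le (by omega)
    have hb : ENNReal.ofReal (r y ^ n) * c ≤ 2 * volume O := by
      rw [← vol_cball hn y (hrpos y hy).le]
      exact le_trans (hrlt y hy).le (by gcongr; exact inter_subset_left)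
    have hb2 : ENNReal.ofReal (r y ^ n) ≤ 2 * volume O / c :=
      ENNReal.le_div_iff_mul_le (Or.inl hcpos.ne') (Or.inl hcfin) |>.2 hb
    have hfin : 2 * volume O / c ≠ ⊤ :=
      (ENNReal.div_lt_top (by finiteness) hcpos.ne').ne
    have := ENNReal.toReal_mono hfin hb2
    rw [ENNReal.toReal_ofReal (by positivity)] at this
    nlinarith [hM ▸ this]
  -- Vitali
  obtain ⟨u, hu_sub, hu_disj, hu_cov⟩ :=
    Vitali.exists_disjoint_subfamily_covering_enlargement_closedBall (Ostar n O)
      (id : En n → En n) r (max M 1) hrle 4 (by norm_num)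
  have hu_cnt : u.Countable := by
    have hd : u.PairwiseDisjoint fun a => ball a (r a) :=
      hu_disj.mono (fun a => ball_subset_closedBall)
    exact hd.countable_of_isOpen (fun a _ => isOpen_ball)
      (fun a ha => ⟨a, mem_ball_self (hrpos a (hu_sub ha))⟩)
  have hcov : Ostar n O ⊆ ⋃ b ∈ u, closedBall b (4 * r b) := by
    intro y hy
    obtain ⟨b, hb, hsub⟩ := hu_cov y hy
    exact mem_biUnion hb (hsub (mem_closedBall_self (hrpos y hy).le))
  calc volume (Ostar n O) ≤ ∑' b : u, volume (closedBall (b : En n) (4 * r b)) :=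
        le_trans (measure_mono hcov) (measure_biUnion_le _ hu_cnt _)
    _ ≤ ∑' b : u, 2 * 4 ^ n * volume (O ∩ closedBall (b : En n) (r b)) := by
        apply ENNReal.tsum_le_tsum
        intro b
        have hbO := hu_sub b.2
        have h4 : volume (closedBall (b : En n) (4 * r b)) =
            (4:ℝ≥0∞) ^ n * volume (closedBall (b : En n) (r b)) := by
          rw [vol_cball hn _ (by linarith [hrpos _ hbO] : (0:ℝ) ≤ 4 * r b),
            vol_cball hn _ (hrpos _ hbO).le, mul_pow, ← mul_assoc,
            ENNReal.ofReal_mul (by positivity)]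
          norm_num [ENNReal.ofReal_pow]
        rw [h4]
        calc (4:ℝ≥0∞) ^ n * volume (closedBall (b : En n) (r b))
            ≤ (4:ℝ≥0∞) ^ n * (2 * volume (O ∩ closedBall (b : En n) (r b))) := by
              gcongr
              exact (hrlt _ hbO).le
          _ = 2 * 4 ^ n * volume (O ∩ closedBall (b : En n) (r b)) := by ring
    _ = 2 * 4 ^ n * ∑' b : u, volume (O ∩ closedBall (b : En n) (r b)) := by
        rw [ENNReal.tsum_mul_left]
    _ ≤ 2 * 4 ^ n * volume O := by
        gcongr
        have hdisj : u.PairwiseDisjoint fun b => O ∩ closedBall b (r b) :=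
          hu_disj.mono fun a => inter_subset_right
        have heq := measure_biUnion (μ := volume) hu_cnt hdisj
          (fun b _ => hO.inter measurableSet_closedBall)
        calc ∑' b : u, volume (O ∩ closedBall (b : En n) (r b))
            = volume (⋃ b ∈ u, O ∩ closedBall b (r b)) := heq.symm
          _ ≤ volume O := measure_mono (iUnion₂_subset fun b _ => inter_subset_left)

/-- integrand `|g(t,y)|^2 / t^(n+1)` as `ℝ≥0∞`. -/
def W (n : ℕ) (g : ℝ → En n → ℝ) (t : ℝ) (y : En n) : ℝ≥0∞ :=
  ENNReal.ofReal (|g t y| ^ 2 / t ^ (n + 1))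

def SAf (n : ℕ) (g : ℝ → En n → ℝ) (x : En n) : ℝ≥0∞ :=
  ∫⁻ t in Set.Ioi (0:ℝ), ∫⁻ y, (ball x t).indicator (fun y => W n g t y) y

def SVf (n : ℕ) (g : ℝ → En n → ℝ) (x : En n) : ℝ≥0∞ :=
  ∫⁻ t in Set.Ioi (0:ℝ), ENNReal.ofReal (|g t x| ^ 2 / t)

lemma measurable_W (hg : Measurable (Function.uncurry g)) :
    Measurable (fun q : ℝ × En n => W n g q.1 q.2) := by
  apply ENNReal.measurable_ofReal.comp
  exact ((hg.abs.pow measurable_const).div ((measurable_fst.pow measurable_const)))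

lemma measurable_V1 (hg : Measurable (Function.uncurry g)) :
    Measurable (fun q : ℝ × En n => ENNReal.ofReal (|g q.1 q.2| ^ 2 / q.1)) := by
  apply ENNReal.measurable_ofReal.comp
  exact ((hg.abs.pow measurable_const).div measurable_fst)

lemma measurable_SVf (hg : Measurable (Function.uncurry g)) : Measurable (SVf n g) := by
  have : Measurable (fun q : En n × ℝ => ENNReal.ofReal (|g q.2 q.1| ^ 2 / q.2)) :=
    (measurable_V1 hg).comp (measurable_snd.prodMk measurable_fst)
  exact this.lintegral_prod_right'

lemma measurable_ballInd (hg : Measurable (Function.uncurry g)) :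
    Measurable (fun q : (En n × ℝ) × En n =>
      (ball q.1.1 q.1.2).indicator (fun y => W n g q.1.2 y) q.2) := by
  have hset : MeasurableSet {q : (En n × ℝ) × En n | q.2 ∈ ball q.1.1 q.1.2} := by
    have : {q : (En n × ℝ) × En n | q.2 ∈ ball q.1.1 q.1.2}
        = {q | dist q.2 q.1.1 < q.1.2} := by ext q; simp [mem_ball]
    rw [this]
    exact measurableSet_lt (measurable_dist.comp
      (measurable_snd.prodMk (measurable_fst.comp measurable_fst)))
      (measurable_snd.comp measurable_fst)
  have hW : Measurable (fun q : (En n × ℝ) × En n => W n g q.1.2 q.2) :=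
    (measurable_W hg).comp ((measurable_snd.comp measurable_fst).prodMk measurable_snd)
  classical
  have heq : (fun q : (En n × ℝ) × En n =>
      (ball q.1.1 q.1.2).indicator (fun y => W n g q.1.2 y) q.2)
      = fun q => if q.2 ∈ ball q.1.1 q.1.2 then W n g q.1.2 q.2 else 0 := by
    funext q
    by_cases h : q.2 ∈ ball q.1.1 q.1.2 <;> simp [Set.indicator_apply, h]
  rw [heq]
  exact Measurable.ite hset hW measurable_const

lemma measurable_SAinner (hg : Measurable (Function.uncurry g)) :
    Measurable (fun q : En n × ℝ =>
      ∫⁻ y, (ball q.1 q.2).indicator (fun y => W n g q.2 y) y) :=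
  (measurable_ballInd hg).lintegral_prod_right'

lemma measurable_SAf (hg : Measurable (Function.uncurry g)) : Measurable (SAf n g) := by
  have : Measurable (fun q : En n × ℝ =>
      ∫⁻ y, (ball q.1 q.2).indicator (fun y => W n g q.2 y) y) := measurable_SAinner hg
  exact this.lintegral_prod_right'

/-- Fubini for the vertical square function on a measurable set. -/
lemma setSV (hg : Measurable (Function.uncurry g)) {D : Set (En n)} (hD : MeasurableSet D) :
    ∫⁻ x in D, SVf n g x =
      ∫⁻ t in Set.Ioi (0:ℝ), ∫⁻ x in D, ENNReal.ofReal (|g t x| ^ 2 / t) := by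
  simp only [SVf]
  rw [lintegral_lintegral_swap]
  exact ((measurable_V1 hg).comp
    (measurable_snd.prodMk measurable_fst)).aemeasurable

lemma setSA (hg : Measurable (Function.uncurry g)) {D : Set (En n)} (hD : MeasurableSet D) :
    ∫⁻ x in D, SAf n g x =
      ∫⁻ t in Set.Ioi (0:ℝ), ∫⁻ y, volume (D ∩ ball y t) * W n g t y := by
  simp only [SAf]
  rw [lintegral_lintegral_swap (measurable_SAinner hg).aemeasurable]
  refine lintegral_congr fun t => ?_
  have h1 : ∀ x y : En n, (ball x t).indicator (fun y => W n g t y) y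
      = (ball y t).indicator (fun _ => W n g t y) x := by
    intro x y
    by_cases h : y ∈ ball x t
    · rw [Set.indicator_of_mem h, Set.indicator_of_mem (mem_ball_comm.1 h)]
    · rw [Set.indicator_of_notMem h,
        Set.indicator_of_notMem (fun h' => h (mem_ball_comm.1 h'))]
  simp_rw [h1]
  have hmeas : AEMeasurable (Function.uncurry fun (x y : En n) =>
      (ball y t).indicator (fun _ => W n g t y) x)
      ((volume.restrict D).prod volume) := by
    classical
    have heq : (Function.uncurry fun (x y : En n) =>
        (ball y t).indicator (fun _ => W n g t y) x)
        = fun q : En n × En n => if dist q.1 q.2 < t then W n g t q.2 else 0 := by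
      funext q
      by_cases h : q.1 ∈ ball q.2 t
      · simp [Function.uncurry, Set.indicator_of_mem h, mem_ball.1 h]
      · rw [Function.uncurry]
        simp only [Set.indicator_of_notMem h]
        rw [if_neg (fun h' => h (mem_ball.2 h'))]
    rw [heq]
    refine (Measurable.ite (measurableSet_lt (measurable_dist) measurable_const) ?_
      measurable_const).aemeasurable
    exact (measurable_W hg).comp (measurable_const.prodMk measurable_snd)
  rw [lintegral_lintegral_swap hmeas]
  refine lintegral_congr fun y => ?_
  rw [lintegral_indicator_const measurableSet_ball,
    Measure.restrict_apply measurableSet_ball, Set.inter_comm, mul_comm]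

/-- Layer cake for `ℝ≥0∞`-valued measurable functions. -/
lemma layer (h : En n → ℝ≥0∞) (hm : Measurable h) :
    ∫⁻ x, h x = ∫⁻ s in Set.Ioi (0:ℝ), volume {x | ENNReal.ofReal s < h x} := by
  set ν := (volume : Measure ℝ).restrict (Set.Ioi 0) with hν
  set S : Set (ℝ × En n) := {q | ENNReal.ofReal q.1 < h q.2} with hS
  have hSm : MeasurableSet S :=
    measurableSet_lt (ENNReal.measurable_ofReal.comp measurable_fst) (hm.comp measurable_snd)
  have h1 : (ν.prod volume) S = ∫⁻ s in Set.Ioi (0:ℝ), volume {x | ENNReal.ofReal s < h x} := by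
    rw [Measure.prod_apply hSm]
    rfl
  have h2 : (ν.prod volume) S = ∫⁻ x, h x := by
    rw [Measure.prod_apply_symm hSm]
    refine lintegral_congr fun x => ?_
    have hpre : (fun s => (s, x)) ⁻¹' S = {s : ℝ | ENNReal.ofReal s < h x} := rfl
    rw [hpre, hν, Measure.restrict_apply
      (measurableSet_lt (ENNReal.measurable_ofReal) measurable_const)]
    by_cases htop : h x = ⊤
    · have : {s : ℝ | ENNReal.ofReal s < h x} ∩ Set.Ioi 0 = Set.Ioi 0 := by
        ext s; simp [htop, ENNReal.ofReal_lt_top]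
      rw [this, Real.volume_Ioi]
      rw [htop]
    · have : {s : ℝ | ENNReal.ofReal s < h x} ∩ Set.Ioi 0 = Set.Ioo 0 (h x).toReal := by
        ext s
        simp only [Set.mem_inter_iff, Set.mem_setOf_eq, Set.mem_Ioi, Set.mem_Ioo]
        constructor
        · rintro ⟨hlt, hs⟩
          exact ⟨hs, (ENNReal.ofReal_lt_iff_lt_toReal hs.le htop).1 hlt⟩
        · rintro ⟨hs, hlt⟩
          exact ⟨(ENNReal.ofReal_lt_iff_lt_toReal hs.le htop).2 hlt, hs⟩
      rw [this, Real.volume_Ioo, sub_zero, ENNReal.ofReal_toReal htop]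
  rw [← h2, h1]

/-- The elementary integral `∫_{s : a ≤ ofReal (s^(1/q))} (ofReal (s^(1/q)))⁻¹ * a ds
  ≤ (q/(1-q)) * a^q`, `0<q<1`. -/
lemma innerInt {q : ℝ} (hq : 0 < q) (hq1 : q < 1) (a : ℝ≥0∞) :
    ∫⁻ s in Set.Ioi (0:ℝ),
        (if a ≤ ENNReal.ofReal (s ^ (1/q)) then (ENNReal.ofReal (s ^ (1/q)))⁻¹ * a else 0)
      ≤ ENNReal.ofReal (q / (1-q)) * a ^ q := by
  rcases eq_or_ne a 0 with rfl | ha0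
  · simp
  rcases eq_or_ne a ⊤ with rfl | haT
  · have : ∀ s : ℝ, (if (⊤:ℝ≥0∞) ≤ ENNReal.ofReal (s ^ (1/q)) then
        (ENNReal.ofReal (s ^ (1/q)))⁻¹ * ⊤ else 0) = 0 := by
      intro s
      exact if_neg (fun h => ENNReal.ofReal_ne_top (top_le_iff.1 h))
    simp only [this, lintegral_zero]
    exact zero_le
  -- now 0 < a < ⊤
  have haR : 0 < a.toReal := ENNReal.toReal_pos ha0 haT
  set c0 : ℝ := a.toReal ^ q with hc0
  have hc0pos : 0 < c0 := Real.rpow_pos_of_pos haR _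
  have hcond : ∀ s : ℝ, 0 < s →
      ((a ≤ ENNReal.ofReal (s ^ (1/q))) ↔ c0 ≤ s) := by
    intro s hs
    rw [← ENNReal.ofReal_toReal haT, ENNReal.ofReal_le_ofReal_iff (by positivity)]
    constructor
    · intro hle
      have := Real.rpow_le_rpow (le_of_lt haR) hle (le_of_lt hq)
      rwa [← Real.rpow_mul hs.le, one_div, inv_mul_cancel₀ hq.ne', Real.rpow_one, ← hc0] at this
    · intro hle
      have := Real.rpow_le_rpow (le_of_lt hc0pos) hle (by positivity : (0:ℝ) ≤ 1/q)
      rwa [hc0, ← Real.rpow_mul haR.le, mul_one_div, div_self hq.ne', Real.rpow_one] at this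
  have step1 : ∫⁻ s in Set.Ioi (0:ℝ),
      (if a ≤ ENNReal.ofReal (s ^ (1/q)) then (ENNReal.ofReal (s ^ (1/q)))⁻¹ * a else 0)
      = ∫⁻ s in Set.Ioi (0:ℝ),
        (Set.Ici c0).indicator (fun s => (ENNReal.ofReal (s ^ (1/q)))⁻¹ * a) s := by
    refine lintegral_congr_ae ?_
    filter_upwards [ae_restrict_mem measurableSet_Ioi] with s hs
    by_cases hcs : c0 ≤ s
    · rw [if_pos ((hcond s hs).2 hcs), Set.indicator_of_mem (Set.mem_Ici.2 hcs)]
    · rw [if_neg (fun h => hcs ((hcond s hs).1 h)),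
        Set.indicator_of_notMem (fun h => hcs (Set.mem_Ici.1 h))]
  have step2 : ∫⁻ s in Set.Ioi (0:ℝ),
        (Set.Ici c0).indicator (fun s => (ENNReal.ofReal (s ^ (1/q)))⁻¹ * a) s
      = ∫⁻ s in Set.Ioi c0, (ENNReal.ofReal (s ^ (1/q)))⁻¹ * a := by
    rw [lintegral_indicator measurableSet_Ici, Measure.restrict_restrict measurableSet_Ici]
    have : Set.Ici c0 ∩ Set.Ioi (0:ℝ) = Set.Ici c0 := by
      apply Set.inter_eq_left.2
      intro s hs
      exact lt_of_lt_of_le hc0pos hs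
    rw [this, ← Measure.restrict_congr_set Ioi_ae_eq_Ici]
  have step3 : ∫⁻ s in Set.Ioi c0, (ENNReal.ofReal (s ^ (1/q)))⁻¹ * a
      = (∫⁻ s in Set.Ioi c0, ENNReal.ofReal (s ^ (-(1/q)))) * a := by
    rw [← lintegral_mul_const' a _ (by finiteness)]
    refine lintegral_congr_ae ?_
    filter_upwards [ae_restrict_mem measurableSet_Ioi] with s hs
    have hs0 : 0 < s := lt_trans hc0pos hs
    rw [Real.rpow_neg hs0.le, ENNReal.ofReal_inv_of_pos (Real.rpow_pos_of_pos hs0 _)]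
  have hexp : -(1/q) < -1 := by
    rw [neg_lt_neg_iff]
    rw [lt_div_iff₀ hq]
    linarith
  have step4 : ∫⁻ s in Set.Ioi c0, ENNReal.ofReal (s ^ (-(1/q)))
      = ENNReal.ofReal (c0 ^ (1 - 1/q) / (1/q - 1)) := by
    rw [← ofReal_integral_eq_lintegral_ofReal
      (integrableOn_Ioi_rpow_of_lt hexp hc0pos)
      ((ae_restrict_mem measurableSet_Ioi).mono
        (fun s hs => Real.rpow_nonneg (le_of_lt (lt_trans hc0pos hs)) _))]
    rw [integral_Ioi_rpow_of_lt hexp hc0pos]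
    congr 1
    rw [show (-(1/q)+1 : ℝ) = 1 - 1/q by ring]
    rw [show (1/q - 1 : ℝ) = -(1-1/q) by ring, div_neg, ← neg_div]
  rw [step1, step2, step3, step4]
  have hfinal : ENNReal.ofReal (c0 ^ (1 - 1/q) / (1/q - 1)) * a
      = ENNReal.ofReal (q / (1-q)) * a ^ q := by
    have h1 : c0 ^ (1 - 1/q) = a.toReal ^ (q - 1) := by
      rw [hc0, ← Real.rpow_mul haR.le]
      congr 1
      field_simp
    have h2 : (1:ℝ)/(1/q - 1) = q/(1-q) := by
      field_simp
    have ha' : a = ENNReal.ofReal a.toReal := (ENNReal.ofReal_toReal haT).symm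
    have h3 : c0 ^ (1-1/q) / (1/q-1) = (q/(1-q)) * (a.toReal ^ (q-1)) := by
      rw [h1, div_eq_mul_inv, ← one_div, h2]
      ring
    rw [h3, ENNReal.ofReal_mul (by apply div_nonneg hq.le; linarith), mul_assoc]
    congr 1
    have h4 : a.toReal ^ (q-1) * a.toReal = a.toReal ^ q := by
      nth_rewrite 2 [← Real.rpow_one a.toReal]
      rw [← Real.rpow_add haR]
      norm_num
    have hAq : a ^ q = ENNReal.ofReal (a.toReal ^ q) := by
      conv_lhs => rw [ha']
      rw [ENNReal.ofReal_rpow_of_pos haR]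
    rw [hAq, ← h4, ENNReal.ofReal_mul (Real.rpow_nonneg haR.le _)]
    exact congrArg _ ha'
  rw [hfinal]

lemma half_ball_bound (hn : 1 ≤ n) {O : Set (En n)} (hO : MeasurableSet O)
    {x : En n} (hx : x ∉ Ostar n O) {t : ℝ} (ht : 0 < t) :
    ENNReal.ofReal (t ^ n) ≤
      2 * (volume (ball (0 : En n) 1))⁻¹ * volume (Oᶜ ∩ ball x t) := by
  set c := volume (ball (0 : En n) 1) with hc
  have hc0 : c ≠ 0 := (measure_ball_pos _ _ one_pos).ne'
  have hcT : c ≠ ⊤ := measure_ball_lt_top.ne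
  have hVfin : volume (ball x t) ≠ ⊤ := measure_ball_lt_top.ne
  have hdens : 2 * volume (O ∩ closedBall x t) ≤ volume (closedBall x t) := by
    by_contra hcon
    exact hx ⟨t, ht, not_le.1 hcon⟩
  have h1 : volume (O ∩ ball x t) ≤ volume (ball x t) / 2 := by
    refine le_trans (measure_mono (Set.inter_subset_inter_right _ ball_subset_closedBall)) ?_
    rw [← vol_cball_eq_ball hn x t]
    rw [ENNReal.le_div_iff_mul_le (Or.inl two_ne_zero) (Or.inl ENNReal.ofNat_ne_top)]
    rw [mul_comm]
    exact hdens
  have hsplit : volume (ball x t ∩ O) + volume (ball x t \ O) = volume (ball x t) :=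
    measure_inter_add_diff _ hO
  have h2 : volume (ball x t) / 2 ≤ volume (Oᶜ ∩ ball x t) := by
    have hBO : volume (ball x t \ O) = volume (ball x t) - volume (ball x t ∩ O) :=
      ENNReal.eq_sub_of_add_eq (ne_top_of_le_ne_top hVfin (measure_mono inter_subset_left))
        (by rw [add_comm]; exact hsplit)
    have : volume (ball x t) - volume (ball x t) / 2 ≤
        volume (ball x t) - volume (ball x t ∩ O) :=
      tsub_le_tsub_left (by rw [Set.inter_comm]; exact h1) _
    rw [ENNReal.sub_half hVfin] at this
    rw [← hBO] at this
    rwa [Set.diff_eq, Set.inter_comm] at this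
  calc ENNReal.ofReal (t ^ n) = 2 * c⁻¹ * (volume (ball x t) / 2) := by
        rw [vol_ball_eq hn x ht.le, ← hc]
        have : 2 * c⁻¹ * (ENNReal.ofReal (t^n) * c / 2)
            = ENNReal.ofReal (t^n) * (c⁻¹ * c) * (2 * 2⁻¹) := by
          rw [div_eq_mul_inv]; ring
        rw [this, ENNReal.inv_mul_cancel hc0 hcT,
          ENNReal.mul_inv_cancel two_ne_zero ENNReal.ofNat_ne_top, mul_one, mul_one]
    _ ≤ 2 * c⁻¹ * volume (Oᶜ ∩ ball x t) := by gcongr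

lemma densityBound (hn : 1 ≤ n) (hg : Measurable (Function.uncurry g))
    {O : Set (En n)} (hO : MeasurableSet O) :
    ∫⁻ x in (Ostar n O)ᶜ, SVf n g x ≤
      2 * (volume (ball (0 : En n) 1))⁻¹ * ∫⁻ x in Oᶜ, SAf n g x := by
  set c := volume (ball (0 : En n) 1) with hc
  have hc0 : c ≠ 0 := (measure_ball_pos _ _ one_pos).ne'
  have hcT : c ≠ ⊤ := measure_ball_lt_top.ne
  have h2cT : 2 * c⁻¹ ≠ ⊤ := ENNReal.mul_ne_top ENNReal.ofNat_ne_top (ENNReal.inv_ne_top.2 hc0)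
  have hFm : MeasurableSet ((Ostar n O)ᶜ) := (isOpen_Ostar hn O).measurableSet.compl
  rw [setSV hg hFm, setSA hg hO.compl, ← lintegral_const_mul' _ _ h2cT]
  refine lintegral_mono_ae ?_
  filter_upwards [ae_restrict_mem measurableSet_Ioi] with t (ht : 0 < t)
  -- fixed t > 0
  rw [← lintegral_indicator hFm, ← lintegral_const_mul' _ _ h2cT]
  refine lintegral_mono fun x => ?_
  by_cases hx : x ∈ (Ostar n O)ᶜ
  · rw [Set.indicator_of_mem hx]
    have hkey := half_ball_bound hn hO hx ht
    have hW : ENNReal.ofReal (|g t x| ^ 2 / t) = ENNReal.ofReal (t ^ n) * W n g t x := by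
      rw [W, ← ENNReal.ofReal_mul (by positivity)]
      congr 1
      field_simp
      ring
    rw [hW]
    calc ENNReal.ofReal (t ^ n) * W n g t x
        ≤ (2 * c⁻¹ * volume (Oᶜ ∩ ball x t)) * W n g t x :=
          mul_le_mul_left hkey _
      _ = 2 * c⁻¹ * (volume (Oᶜ ∩ ball x t) * W n g t x) := by ring
  · rw [Set.indicator_of_notMem hx]
    exact zero_le

lemma goodLambda (hn : 1 ≤ n) (hg : Measurable (Function.uncurry g))
    {b : ℝ≥0∞} (hb0 : b ≠ 0) (hbT : b ≠ ⊤) :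
    volume {x | b < SVf n g x} ≤
      2 * 4 ^ n * volume {x | b < SAf n g x} +
        b⁻¹ * (2 * (volume (ball (0 : En n) 1))⁻¹ *
          ∫⁻ x, ({x | SAf n g x ≤ b}).indicator (SAf n g) x) := by
  set O : Set (En n) := {x | b < SAf n g x} with hOdef
  have hOm : MeasurableSet O := measurableSet_lt measurable_const (measurable_SAf hg)
  have hsub : {x | b < SVf n g x} ⊆ Ostar n O ∪ ((Ostar n O)ᶜ ∩ {x | b < SVf n g x}) := by
    intro x hxv
    by_cases hx : x ∈ Ostar n O
    · exact Or.inl hx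
    · exact Or.inr ⟨hx, hxv⟩
  refine le_trans (le_trans (measure_mono hsub) (measure_union_le _ _)) (add_le_add ?_ ?_)
  · exact weakMax hn O hOm
  · have hFm : MeasurableSet ((Ostar n O)ᶜ) := (isOpen_Ostar hn O).measurableSet.compl
    have hVm : MeasurableSet {x | b ≤ SVf n g x} :=
      measurableSet_le measurable_const (measurable_SVf hg)
    have hcheb : b * (volume.restrict ((Ostar n O)ᶜ)) {x | b ≤ SVf n g x} ≤
        ∫⁻ x in (Ostar n O)ᶜ, SVf n g x :=
      mul_meas_ge_le_lintegral₀ (measurable_SVf hg).aemeasurable b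
    have hm1 : volume ((Ostar n O)ᶜ ∩ {x | b < SVf n g x}) ≤
        (volume.restrict ((Ostar n O)ᶜ)) {x | b ≤ SVf n g x} := by
      rw [Measure.restrict_apply hVm]
      exact measure_mono (fun x hx => ⟨le_of_lt (Set.mem_setOf_eq ▸ hx.2), hx.1⟩)
    have hstep : volume ((Ostar n O)ᶜ ∩ {x | b < SVf n g x}) ≤
        b⁻¹ * ∫⁻ x in (Ostar n O)ᶜ, SVf n g x := by
      have h := le_trans (mul_le_mul_right hm1 b) hcheb
      calc volume ((Ostar n O)ᶜ ∩ {x | b < SVf n g x})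
          = b⁻¹ * b * volume ((Ostar n O)ᶜ ∩ {x | b < SVf n g x}) := by
            rw [ENNReal.inv_mul_cancel hb0 hbT, one_mul]
        _ = b⁻¹ * (b * volume ((Ostar n O)ᶜ ∩ {x | b < SVf n g x})) := by rw [mul_assoc]
        _ ≤ b⁻¹ * ∫⁻ x in (Ostar n O)ᶜ, SVf n g x := mul_le_mul_right h _
    refine le_trans hstep (mul_le_mul_right ?_ _)
    refine le_trans (densityBound hn hg hOm) ?_
    have hOc : Oᶜ = {x | SAf n g x ≤ b} := by
      ext x
      simp [hOdef, not_lt]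
    rw [← lintegral_indicator hOm.compl, hOc]

lemma rpow_level (u : ℝ≥0∞) {q s : ℝ} (hq : 0 < q) (hs : 0 < s) :
    (ENNReal.ofReal s < u ^ q) ↔ ENNReal.ofReal (s ^ (1/q)) < u := by
  rw [← ENNReal.ofReal_rpow_of_pos hs]
  constructor
  · intro h
    have := ENNReal.rpow_lt_rpow h (by positivity : (0:ℝ) < 1/q)
    rwa [← ENNReal.rpow_mul, mul_one_div, div_self hq.ne', ENNReal.rpow_one] at this
  · intro h
    have := ENNReal.rpow_lt_rpow h hq
    rwa [← ENNReal.rpow_mul, one_div_mul_cancel hq.ne', ENNReal.rpow_one] at this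

lemma mainIneq (hn : 1 ≤ n) (hg : Measurable (Function.uncurry g))
    {q : ℝ} (hq : 0 < q) (hq1 : q < 1) :
    ∫⁻ x, SVf n g x ^ q ≤
      (2 * 4 ^ n + 2 * (volume (ball (0 : En n) 1))⁻¹ * ENNReal.ofReal (q / (1-q))) *
        ∫⁻ x, SAf n g x ^ q := by
  classical
  set c := volume (ball (0 : En n) 1) with hc
  have hc0 : c ≠ 0 := (measure_ball_pos _ _ one_pos).ne'
  have hcT : c ≠ ⊤ := measure_ball_lt_top.ne
  have h2cT : 2 * c⁻¹ ≠ ⊤ := ENNReal.mul_ne_top ENNReal.ofNat_ne_top (ENNReal.inv_ne_top.2 hc0)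
  set b : ℝ → ℝ≥0∞ := fun s => ENNReal.ofReal ((max s 0) ^ (1/q)) with hbdef
  have hbmono : Monotone b := by
    intro s₁ s₂ h
    exact ENNReal.ofReal_le_ofReal
      (Real.rpow_le_rpow (le_max_right _ _) (max_le_max h le_rfl) (by positivity))
  have hbmeas : Measurable b :=
    ((measurable_id.max measurable_const).pow measurable_const).ennreal_ofReal
  have hbpos : ∀ s : ℝ, 0 < s → b s ≠ 0 := by
    intro s hs
    simp only [hbdef, ne_eq, ENNReal.ofReal_eq_zero, not_le]
    have : (0:ℝ) < max s 0 := lt_max_of_lt_left hs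
    positivity
  have hbT : ∀ s : ℝ, b s ≠ ⊤ := fun s => ENNReal.ofReal_ne_top
  have hbeq : ∀ s : ℝ, 0 < s → b s = ENNReal.ofReal (s ^ (1/q)) := by
    intro s hs
    rw [hbdef]
    simp [max_eq_left hs.le]
  -- the SV-level sets
  have hsetV : ∀ s : ℝ, 0 < s →
      {x | ENNReal.ofReal s < SVf n g x ^ q} = {x | b s < SVf n g x} := by
    intro s hs
    ext x
    simp only [Set.mem_setOf_eq]
    rw [hbeq s hs]
    exact rpow_level _ hq hs
  have hsetA : ∀ s : ℝ, 0 < s →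
      {x | ENNReal.ofReal s < SAf n g x ^ q} = {x | b s < SAf n g x} := by
    intro s hs
    ext x
    simp only [Set.mem_setOf_eq]
    rw [hbeq s hs]
    exact rpow_level _ hq hs
  have hSVq : Measurable fun x => SVf n g x ^ q :=
    (measurable_SVf hg).pow measurable_const
  have hSAq : Measurable fun x => SAf n g x ^ q :=
    (measurable_SAf hg).pow measurable_const
  rw [layer _ hSVq]
  have hstep1 : ∫⁻ s in Set.Ioi (0:ℝ), volume {x | ENNReal.ofReal s < SVf n g x ^ q}
      ≤ ∫⁻ s in Set.Ioi (0:ℝ),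
          (2 * 4 ^ n * volume {x | b s < SAf n g x} +
            (b s)⁻¹ * (2 * c⁻¹ * ∫⁻ x, ({x | SAf n g x ≤ b s}).indicator (SAf n g) x)) := by
    refine lintegral_mono_ae ?_
    filter_upwards [ae_restrict_mem measurableSet_Ioi] with s (hs : 0 < s)
    rw [hsetV s hs]
    exact goodLambda hn hg (hbpos s hs) (hbT s)
  refine le_trans hstep1 ?_
  have hmeas1 : Measurable fun s => 2 * 4 ^ n * volume {x | b s < SAf n g x} := by
    have : Antitone fun s => volume {x | b s < SAf n g x} := by
      intro s₁ s₂ h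
      exact measure_mono (fun x hx => lt_of_le_of_lt (hbmono h) hx)
    exact (Antitone.measurable this).const_mul _
  rw [lintegral_add_left hmeas1]
  rw [add_mul]
  refine add_le_add ?_ ?_
  · -- first term
    rw [lintegral_const_mul' _ _ (ENNReal.mul_ne_top ENNReal.ofNat_ne_top (by simp [ENNReal.pow_ne_top]) : (2:ℝ≥0∞) * 4 ^ n ≠ ⊤)]
    refine mul_le_mul_right (le_of_eq ?_) _
    rw [layer _ hSAq]
    refine lintegral_congr_ae ?_
    filter_upwards [ae_restrict_mem measurableSet_Ioi] with s (hs : 0 < s)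
    rw [hsetA s hs]
  · -- second term
    have hcongr1 : ∫⁻ s in Set.Ioi (0:ℝ),
        (b s)⁻¹ * (2 * c⁻¹ * ∫⁻ x, ({x | SAf n g x ≤ b s}).indicator (SAf n g) x)
        = ∫⁻ s in Set.Ioi (0:ℝ),
          2 * c⁻¹ * ∫⁻ x, (b s)⁻¹ * ({x | SAf n g x ≤ b s}).indicator (SAf n g) x := by
      refine lintegral_congr_ae ?_
      filter_upwards [ae_restrict_mem measurableSet_Ioi] with s (hs : 0 < s)
      rw [lintegral_const_mul' ((b s)⁻¹) _ (ENNReal.inv_ne_top.2 (hbpos s hs))]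
      ring
    rw [hcongr1, lintegral_const_mul' _ _ h2cT]
    refine le_trans (mul_le_mul_right (?_ : _ ≤ ENNReal.ofReal (q / (1-q)) *
      ∫⁻ x, SAf n g x ^ q) (2 * c⁻¹)) (le_of_eq (mul_assoc _ _ _).symm)
    have hjm : Measurable (Function.uncurry fun (s : ℝ) (x : En n) =>
        (b s)⁻¹ * ({x | SAf n g x ≤ b s}).indicator (SAf n g) x) := by
      have heq : (Function.uncurry fun (s : ℝ) (x : En n) =>
          (b s)⁻¹ * ({x | SAf n g x ≤ b s}).indicator (SAf n g) x)
          = fun z : ℝ × En n =>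
            (b z.1)⁻¹ * (if SAf n g z.2 ≤ b z.1 then SAf n g z.2 else 0) := by
        funext z
        rw [Function.uncurry]
        simp only [Set.indicator_apply, Set.mem_setOf_eq]
      rw [heq]
      exact ((hbmeas.comp measurable_fst).inv).mul
        (Measurable.ite (measurableSet_le ((measurable_SAf hg).comp measurable_snd)
            (hbmeas.comp measurable_fst))
          ((measurable_SAf hg).comp measurable_snd) measurable_const)
    rw [lintegral_lintegral_swap hjm.aemeasurable]
    have hx_bound : ∀ x : En n,
        ∫⁻ s in Set.Ioi (0:ℝ), (b s)⁻¹ * ({x | SAf n g x ≤ b s}).indicator (SAf n g) x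
          ≤ ENNReal.ofReal (q / (1-q)) * SAf n g x ^ q := by
      intro x
      have hcongr2 : ∫⁻ s in Set.Ioi (0:ℝ),
          (b s)⁻¹ * ({x | SAf n g x ≤ b s}).indicator (SAf n g) x
          = ∫⁻ s in Set.Ioi (0:ℝ),
            (if SAf n g x ≤ ENNReal.ofReal (s ^ (1/q)) then
              (ENNReal.ofReal (s ^ (1/q)))⁻¹ * SAf n g x else 0) := by
        refine lintegral_congr_ae ?_
        filter_upwards [ae_restrict_mem measurableSet_Ioi] with s (hs : 0 < s)
        simp only [Set.indicator_apply, Set.mem_setOf_eq, hbeq s hs, mul_ite, mul_zero]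
      rw [hcongr2]
      exact innerInt hq hq1 _
    calc ∫⁻ x, ∫⁻ s in Set.Ioi (0:ℝ),
          (b s)⁻¹ * ({x | SAf n g x ≤ b s}).indicator (SAf n g) x
        ≤ ∫⁻ x, ENNReal.ofReal (q / (1-q)) * SAf n g x ^ q := lintegral_mono hx_bound
      _ = ENNReal.ofReal (q / (1-q)) * ∫⁻ x, SAf n g x ^ q :=
          lintegral_const_mul' _ _ ENNReal.ofReal_ne_top

end Aux

/-- (Corollary, case `p ≤ 2`.) There is `C = C(n,p) > 0` such that
`‖Vg‖_p ≤ C ‖g‖_{T^{p,2}_1}` for all locally square integrable `g`. -/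
theorem statement9 (n : ℕ) (hn : 1 ≤ n) (p : ℝ) (hp : 0 < p) (hp2 : p ≤ 2) :
    ∃ C : ℝ, 0 < C ∧ ∀ g : ℝ → En n → ℝ, LocSqInt n g →
      vertNorm n p g ≤ ENNReal.ofReal C * tentNorm n p 1 g := by
  classical
  set c := volume (ball (0 : En n) 1) with hc
  have hc0 : c ≠ 0 := (measure_ball_pos _ _ one_pos).ne'
  have hcT : c ≠ ⊤ := measure_ball_lt_top.ne
  have hKle : ∀ K : ℝ≥0∞, K ≠ ⊤ → K ≤ ENNReal.ofReal (K.toReal + 1) := by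
    intro K hK
    calc K = ENNReal.ofReal K.toReal := (ENNReal.ofReal_toReal hK).symm
      _ ≤ ENNReal.ofReal (K.toReal + 1) := ENNReal.ofReal_le_ofReal (by linarith)
  have hconical : ∀ g : ℝ → En n → ℝ, conicalSq n 1 g = fun x => SAf n g x ^ (1/2 : ℝ) := by
    intro g
    funext x
    simp only [conicalSq, SAf, W, one_mul]
  have hvert : ∀ g : ℝ → En n → ℝ, vertSq n g = fun x => SVf n g x ^ (1/2 : ℝ) := by
    intro g
    funext x
    simp only [vertSq, SVf]
  rcases eq_or_lt_of_le hp2 with hpeq | hplt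
  · -- p = 2
    subst hpeq
    refine ⟨((c⁻¹ : ℝ≥0∞) ^ (1/2 : ℝ)).toReal + 1, by positivity, ?_⟩
    rintro g ⟨hg, -⟩
    have hinvT : (c⁻¹ : ℝ≥0∞) ^ (1/2 : ℝ) ≠ ⊤ :=
      ENNReal.rpow_ne_top_of_nonneg (by norm_num) (ENNReal.inv_ne_top.2 hc0)
    -- identity ∫ SAf = c * ∫ SVf
    have hA : ∫⁻ x, SAf n g x = c * ∫⁻ x, SVf n g x := by
      have h1 : ∫⁻ x in (Set.univ : Set (En n)), SAf n g x
          = ∫⁻ t in Set.Ioi (0:ℝ), ∫⁻ y, volume ((Set.univ : Set (En n)) ∩ ball y t) * W n g t y :=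
        setSA hg MeasurableSet.univ
      have h2 : ∫⁻ x in (Set.univ : Set (En n)), SVf n g x
          = ∫⁻ t in Set.Ioi (0:ℝ), ∫⁻ x, ENNReal.ofReal (|g t x| ^ 2 / t) := by
        rw [setSV hg MeasurableSet.univ]
        refine lintegral_congr fun t => ?_
        rw [Measure.restrict_univ]
      rw [Measure.restrict_univ] at h1 h2
      rw [h1, h2, ← lintegral_const_mul' _ _ hcT]
      refine lintegral_congr_ae ?_
      filter_upwards [ae_restrict_mem measurableSet_Ioi] with t (ht : 0 < t)
      rw [← lintegral_const_mul' _ _ hcT]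
      refine lintegral_congr fun y => ?_
      rw [Set.univ_inter, vol_ball_eq hn y ht.le, ← hc]
      have hW : ENNReal.ofReal (|g t y| ^ 2 / t) = ENNReal.ofReal (t ^ n) * W n g t y := by
        rw [W, ← ENNReal.ofReal_mul (by positivity)]
        congr 1
        field_simp
        ring
      rw [hW]
      ring
    have hV : ∫⁻ x, SVf n g x = c⁻¹ * ∫⁻ x, SAf n g x := by
      rw [hA, ← mul_assoc, ENNReal.inv_mul_cancel hc0 hcT, one_mul]
    have hsq : ∀ u : ℝ≥0∞, (u ^ (1/2 : ℝ)) ^ (2 : ℝ) = u := by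
      intro u
      rw [← ENNReal.rpow_mul]
      norm_num
    rw [vertNorm, tentNorm, hvert g, hconical g]
    simp only [hsq]
    rw [hV, ENNReal.mul_rpow_of_nonneg _ _ (by norm_num : (0:ℝ) ≤ 1/2)]
    exact mul_le_mul_left (hKle _ hinvT) _
  · -- p < 2
    set q : ℝ := p / 2 with hq
    have hq0 : 0 < q := by positivity
    have hq1 : q < 1 := by rw [hq]; linarith
    set K : ℝ≥0∞ := 2 * 4 ^ n + 2 * c⁻¹ * ENNReal.ofReal (q / (1-q)) with hK
    have hKT : K ≠ ⊤ := by
      rw [hK]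
      refine ENNReal.add_ne_top.2 ⟨?_, ?_⟩
      · exact ENNReal.mul_ne_top ENNReal.ofNat_ne_top (by simp [ENNReal.pow_ne_top])
      · exact ENNReal.mul_ne_top
          (ENNReal.mul_ne_top ENNReal.ofNat_ne_top (ENNReal.inv_ne_top.2 hc0))
          ENNReal.ofReal_ne_top
    have hKpT : K ^ (1/p : ℝ) ≠ ⊤ := ENNReal.rpow_ne_top_of_nonneg (by positivity) hKT
    refine ⟨(K ^ (1/p : ℝ)).toReal + 1, by positivity, ?_⟩
    rintro g ⟨hg, -⟩
    have hpowv : ∀ u : ℝ≥0∞, (u ^ (1/2 : ℝ)) ^ p = u ^ q := by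
      intro u
      rw [← ENNReal.rpow_mul]
      congr 1
      rw [hq]
      ring
    have hle : ∫⁻ x, SVf n g x ^ q ≤ K * ∫⁻ x, SAf n g x ^ q := mainIneq hn hg hq0 hq1
    rw [vertNorm, tentNorm, hvert g, hconical g]
    simp only [hpowv]
    calc (∫⁻ x, SVf n g x ^ q) ^ (1/p : ℝ)
        ≤ (K * ∫⁻ x, SAf n g x ^ q) ^ (1/p : ℝ) :=
          ENNReal.rpow_le_rpow hle (by positivity)
      _ = K ^ (1/p : ℝ) * (∫⁻ x, SAf n g x ^ q) ^ (1/p : ℝ) :=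
          ENNReal.mul_rpow_of_nonneg _ _ (by positivity)
      _ ≤ ENNReal.ofReal ((K ^ (1/p : ℝ)).toReal + 1) * (∫⁻ x, SAf n g x ^ q) ^ (1/p : ℝ) :=
          mul_le_mul_left (hKle _ hKpT) _

end
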